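/- Let K and τ be positive integers with τ ≤ K, and let γ : Fin K → ℝ with γ_k > 0 for all k. Set z_k = γ_k/(1 + γ_k) and B = (Σ_j z_j)/τ, and suppose Σ_k z_k ≤ τ (the load-region condition) and z_k < B for every k. Then there exist unit-norm vectors q_1, …, q_K ∈ ℝ^τ such that for every k, setting s_k = Σ_{j=1}^{K} z_j ⟨q_k, q_j⟩², one has z_k < s_k and z_k/(s_k − z_k) ≥ γ_k; i.e., the asymptotic SINR lower bound of every user meets its SINR requirement. -/

import Mathlib

set_option maxHeartbeats 1000000
open Finset Real

lemma split_params {a b : ℝ} (ha0 : 0 < a) (ha1 : a < 1) (hb0 : 0 < b) (hb1 : b < 1)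
    (hab : 1 < a + b) :
    ∃ u v : ℝ, 0 ≤ u ∧ u ≤ 1 ∧ 0 ≤ v ∧ v ≤ 1 ∧
      a * u + b * v = 1 ∧
      a ^ 2 * (u * (1 - u)) = b ^ 2 * (v * (1 - v)) := by
  have hd : 0 < 2 - a - b := by linarith
  have hD : 0 < a * (2 - a - b) := by positivity
  set u : ℝ := (1 - b) / (a * (2 - a - b)) with hu
  set v : ℝ := (1 - a * u) / b with hv
  have hu0 : 0 ≤ u := by
    apply div_nonneg (by linarith) hD.le
  have hau : a * u = (1 - b) / (2 - a - b) := by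
    rw [hu]; field_simp
  have hu1 : u ≤ 1 := by
    rw [hu, div_le_one hD]
    nlinarith
  have hv0 : 0 ≤ v := by
    apply div_nonneg _ hb0.le
    rw [hau, sub_nonneg, div_le_one hd]; linarith
  have hv1 : v ≤ 1 := by
    rw [hv, div_le_one hb0, hau, sub_le_iff_le_add]
    have h2 : (1 - b) ≤ (1 - b) / (2 - a - b) := by
      rw [le_div_iff₀ hd]; nlinarith
    linarith
  refine ⟨u, v, hu0, hu1, hv0, hv1, ?_, ?_⟩
  · rw [hv]; field_simp; ring
  · rw [hv, hau, hu]
    field_simp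
    ring


lemma isTight_perm {n τ : ℕ} {w : Fin n → ℝ} (σ : Equiv.Perm (Fin n))
    (h : ∃ q : Fin n → Fin τ → ℝ,
      (∀ i, ∑ a, (q i a) ^ 2 = 1) ∧
      ∀ x : Fin τ → ℝ, ∑ i, (w ∘ σ) i * (∑ a, q i a * x a) ^ 2 = ∑ a, (x a) ^ 2) :
    ∃ q : Fin n → Fin τ → ℝ,
      (∀ i, ∑ a, (q i a) ^ 2 = 1) ∧
      ∀ x : Fin τ → ℝ, ∑ i, w i * (∑ a, q i a * x a) ^ 2 = ∑ a, (x a) ^ 2 := by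
  obtain ⟨q, hq1, hq2⟩ := h
  refine ⟨fun i => q (σ.symm i), fun i => hq1 _, fun x => ?_⟩
  rw [← hq2 x]
  exact (Fintype.sum_equiv σ _ _ (fun i => by simp)).symm

lemma exists_tight : ∀ n τ : ℕ, 1 ≤ τ → ∀ w : Fin n → ℝ,
    (∀ i, 0 < w i) → (∀ i, w i ≤ 1) → (∑ i, w i = (τ : ℝ)) →
    ∃ q : Fin n → Fin τ → ℝ,
      (∀ i, ∑ a, (q i a) ^ 2 = 1) ∧
      ∀ x : Fin τ → ℝ, ∑ i, w i * (∑ a, q i a * x a) ^ 2 = ∑ a, (x a) ^ 2 := by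
  intro n
  induction n using Nat.strong_induction_on with
  | _ n IH =>
    intro τ hτ w hw0 hw1 hsum
    by_cases hall : ∀ i, w i = 1
    · -- all weights are 1 : orthonormal basis, n = τ
      have hn : (n : ℝ) = (τ : ℝ) := by
        rw [← hsum]; simp [hall]
      have hnτ : n = τ := by exact_mod_cast hn
      subst hnτ
      refine ⟨fun i a => if a = i then 1 else 0, fun i => ?_, fun x => ?_⟩
      · simp [ite_pow]
      · simp [hall, ite_mul, Finset.sum_ite_eq']
    · push_neg at hall
      obtain ⟨i, hi⟩ := hall
      have hwi : w i < 1 := lt_of_le_of_ne (hw1 i) hi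
      have hn1 : 1 ≤ n := Nat.pos_of_ne_zero (by rintro rfl; exact i.elim0)
      -- find a second index with weight < 1
      have hj : ∃ j, j ≠ i ∧ w j < 1 := by
        by_contra hc
        push_neg at hc
        have h1 : ∀ j ∈ Finset.univ.erase i, w j = 1 := by
          intro j hj
          exact le_antisymm (hw1 j) (hc j (Finset.ne_of_mem_erase hj))
        have hsum' : (τ : ℝ) = w i + ∑ j ∈ Finset.univ.erase i, w j := by
          rw [← hsum, Finset.add_sum_erase _ _ (Finset.mem_univ i)]
        rw [Finset.sum_congr rfl h1] at hsum'
        rw [Finset.sum_const, Finset.card_erase_of_mem (Finset.mem_univ i)] at hsum'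
        simp only [Finset.card_univ, Fintype.card_fin, nsmul_eq_mul, mul_one] at hsum'
        have hcast : ((n - 1 : ℕ) : ℝ) = (n : ℝ) - 1 := by
          have := Nat.cast_sub hn1 (R := ℝ); simpa using this
        have hlt : (τ : ℝ) < n := by
          rw [hsum', hcast]; linarith
        have hgt : ((n - 1 : ℕ) : ℝ) < τ := by
          rw [hsum', hcast]; linarith [hw0 i]
        have h2 : τ < n := by exact_mod_cast hlt
        have h3 : n - 1 < τ := by exact_mod_cast hgt
        omega
      obtain ⟨j, hji, hwj⟩ := hj
      have hn2 : 2 ≤ n := by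
        by_contra hc
        push_neg at hc
        interval_cases n
        exact hji (Subsingleton.elim j i)
      obtain ⟨m, rfl⟩ : ∃ m, n = m + 2 := ⟨n - 2, by omega⟩
      -- move the two light indices to the last two positions via a permutation
      set p1 : Fin (m + 2) := Fin.last (m + 1) with hp1
      set p2 : Fin (m + 2) := (Fin.last m).castSucc with hp2
      have hp12 : p2 ≠ p1 := (Fin.castSucc_lt_last (Fin.last m)).ne
      set s1 := Equiv.swap i p1 with hs1
      set j' := s1 j with hj'def
      have hj'p1 : j' ≠ p1 := by
        intro h
        apply hji
        have := congrArg s1 h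
        rwa [hj'def, Equiv.swap_apply_self, Equiv.swap_apply_right] at this
      set σ := (Equiv.swap j' p2).trans s1 with hσ
      have hσ1 : σ p1 = i := by
        have h1 : Equiv.swap j' p2 p1 = p1 :=
          Equiv.swap_apply_of_ne_of_ne hj'p1.symm hp12.symm
        rw [hσ, Equiv.trans_apply, h1, hs1, Equiv.swap_apply_right]
      have hσ2 : σ p2 = j := by
        rw [hσ, Equiv.trans_apply, Equiv.swap_apply_right, hj'def, hs1,
          Equiv.swap_apply_self]
      apply isTight_perm σ
      set W : Fin (m + 2) → ℝ := w ∘ σ with hW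
      have hW0 : ∀ k, 0 < W k := fun k => hw0 _
      have hW1 : ∀ k, W k ≤ 1 := fun k => hw1 _
      have hWsum : ∑ k, W k = (τ : ℝ) := by
        rw [← hsum]
        exact Fintype.sum_equiv σ _ _ (fun k => rfl)
      have ha1 : W p1 < 1 := by
        simpa [hW, Function.comp, hσ1] using hwi
      have hb1 : W p2 < 1 := by
        simpa [hW, Function.comp, hσ2] using hwj
      set a := W p1 with hadef
      set b := W p2 with hbdef
      have ha0 : 0 < a := hW0 p1
      have hb0 : 0 < b := hW0 p2
      set r : Fin m → ℝ := fun k => W (k.castSucc.castSucc) with hr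
      have hdecomp : ∀ f : Fin (m + 2) → ℝ,
          ∑ k, f k = (∑ k : Fin m, f (k.castSucc.castSucc)) + f p2 + f p1 := by
        intro f
        rw [Fin.sum_univ_castSucc, Fin.sum_univ_castSucc]
      rcases le_or_gt (a + b) 1 with hab | hab
      · -- MERGE case
        set W₂ : Fin (m + 1) → ℝ := Fin.snoc r (a + b) with hW₂
        have hW₂0 : ∀ k, 0 < W₂ k := by
          intro k
          refine Fin.lastCases ?_ (fun k' => ?_) k
          · simp only [hW₂, Fin.snoc_last]; linarith
          · simp only [hW₂, Fin.snoc_castSucc]; exact hW0 _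
        have hW₂1 : ∀ k, W₂ k ≤ 1 := by
          intro k
          refine Fin.lastCases ?_ (fun k' => ?_) k
          · simp only [hW₂, Fin.snoc_last]; exact hab
          · simp only [hW₂, Fin.snoc_castSucc]; exact hW1 _
        have hW₂sum : ∑ k, W₂ k = (τ : ℝ) := by
          rw [Fin.sum_univ_castSucc]
          simp only [hW₂, Fin.snoc_castSucc, Fin.snoc_last]
          rw [← hWsum, hdecomp W]
          ring
        obtain ⟨q₂, hq₂1, hq₂2⟩ := IH (m + 1) (by omega) τ hτ W₂ hW₂0 hW₂1 hW₂sum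
        refine ⟨Fin.snoc (Fin.snoc (fun k => q₂ k.castSucc) (q₂ (Fin.last m)))
            (q₂ (Fin.last m)), fun k => ?_, fun x => ?_⟩
        · refine Fin.lastCases ?_ (fun k' => ?_) k
          · simp only [Fin.snoc_last]; exact hq₂1 _
          · refine Fin.lastCases ?_ (fun k'' => ?_) k'
            · simp only [Fin.snoc_castSucc, Fin.snoc_last]; exact hq₂1 _
            · simp only [Fin.snoc_castSucc]; exact hq₂1 _
        · rw [hdecomp, ← hq₂2 x, Fin.sum_univ_castSucc]
          simp only [hp1, hp2, Fin.snoc_last, Fin.snoc_castSucc, hW₂]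
          ring
      · -- SPLIT case
        have hrnn : 0 ≤ ∑ k : Fin m, r k :=
          Finset.sum_nonneg (fun k _ => (hW0 _).le)
        have hτ2 : 2 ≤ τ := by
          have h1 : (1 : ℝ) < (τ : ℝ) := by
            rw [← hWsum, hdecomp W]
            have : W p2 = b := rfl
            linarith
          have : 1 < τ := by exact_mod_cast h1
          omega
        obtain ⟨t, rfl⟩ : ∃ t, τ = t + 1 := ⟨τ - 1, by omega⟩
        have ht1 : 1 ≤ t := by omega
        obtain ⟨u, v, hu0, hu1, hv0, hv1, huv1, huv2⟩ :=
          split_params ha0 ha1 hb0 hb1 hab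
        set W₂ : Fin (m + 1) → ℝ := Fin.snoc r (a + b - 1) with hW₂
        have hW₂0 : ∀ k, 0 < W₂ k := by
          intro k
          refine Fin.lastCases ?_ (fun k' => ?_) k
          · simp only [hW₂, Fin.snoc_last]; linarith
          · simp only [hW₂, Fin.snoc_castSucc]; exact hW0 _
        have hW₂1 : ∀ k, W₂ k ≤ 1 := by
          intro k
          refine Fin.lastCases ?_ (fun k' => ?_) k
          · simp only [hW₂, Fin.snoc_last]; linarith
          · simp only [hW₂, Fin.snoc_castSucc]; exact hW1 _
        have hW₂sum : ∑ k, W₂ k = (t : ℝ) := by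
          rw [Fin.sum_univ_castSucc]
          simp only [hW₂, Fin.snoc_castSucc, Fin.snoc_last]
          have h1 : ∑ k, W k = ((t + 1 : ℕ) : ℝ) := hWsum
          rw [hdecomp W] at h1
          push_cast at h1 ⊢
          linarith
        obtain ⟨q₂, hq₂1, hq₂2⟩ := IH (m + 1) (by omega) t ht1 W₂ hW₂0 hW₂1 hW₂sum
        set v' : Fin t → ℝ := q₂ (Fin.last m) with hv'
        have h1u : 0 ≤ 1 - u := by linarith
        have h1v : 0 ≤ 1 - v := by linarith
        -- the two split vectors
        set qa : Fin (t + 1) → ℝ := Fin.cons (Real.sqrt u) (fun c => Real.sqrt (1 - u) * v' c) with hqa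
        set qb : Fin (t + 1) → ℝ := Fin.cons (Real.sqrt v) (fun c => -(Real.sqrt (1 - v)) * v' c) with hqb
        have hx : a * (Real.sqrt u * Real.sqrt (1 - u)) = b * (Real.sqrt v * Real.sqrt (1 - v)) := by
          have hsq : (a * (Real.sqrt u * Real.sqrt (1 - u))) ^ 2
              = (b * (Real.sqrt v * Real.sqrt (1 - v))) ^ 2 := by
            rw [mul_pow, mul_pow, mul_pow, mul_pow, Real.sq_sqrt hu0, Real.sq_sqrt h1u,
              Real.sq_sqrt hv0, Real.sq_sqrt h1v]
            nlinarith [huv2]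
          have hL : 0 ≤ a * (Real.sqrt u * Real.sqrt (1 - u)) := by positivity
          have hR : 0 ≤ b * (Real.sqrt v * Real.sqrt (1 - v)) := by positivity
          have := congrArg Real.sqrt hsq
          rwa [Real.sqrt_sq hL, Real.sqrt_sq hR] at this
        refine ⟨Fin.snoc (Fin.snoc (fun k => Fin.cons 0 (q₂ k.castSucc)) qb) qa,
            fun k => ?_, fun x => ?_⟩
        · refine Fin.lastCases ?_ (fun k' => ?_) k
          · -- qa is a unit vector
            simp only [Fin.snoc_last, hqa]
            rw [Fin.sum_univ_succ]
            simp only [Fin.cons_zero, Fin.cons_succ, mul_pow]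
            rw [← Finset.mul_sum, hq₂1, Real.sq_sqrt hu0, Real.sq_sqrt h1u]
            ring
          · refine Fin.lastCases ?_ (fun k'' => ?_) k'
            · -- qb is a unit vector
              simp only [Fin.snoc_castSucc, Fin.snoc_last, hqb]
              rw [Fin.sum_univ_succ]
              simp only [Fin.cons_zero, Fin.cons_succ, neg_mul, neg_sq, mul_pow]
              rw [← Finset.mul_sum, hq₂1, Real.sq_sqrt hv0, Real.sq_sqrt h1v]
              ring
            · -- embedded vectors are unit
              simp only [Fin.snoc_castSucc]
              rw [Fin.sum_univ_succ]
              simp only [Fin.cons_zero, Fin.cons_succ]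
              rw [hq₂1]
              norm_num
        · -- the quadratic form identity
          rw [hdecomp]
          simp only [hp1, hp2, Fin.snoc_last, Fin.snoc_castSucc]
          set S := ∑ c, v' c * x c.succ with hS
          have hemb : ∀ y : Fin t → ℝ,
              ∑ c : Fin (t + 1), (Fin.cons 0 y : Fin (t+1) → ℝ) c * x c
                = ∑ c : Fin t, y c * x c.succ := by
            intro y
            rw [Fin.sum_univ_succ]
            simp [Fin.cons_zero, Fin.cons_succ]
          have hqax : ∑ c : Fin (t + 1), qa c * x c
              = Real.sqrt u * x 0 + Real.sqrt (1 - u) * S := by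
            rw [hqa, Fin.sum_univ_succ]
            simp only [Fin.cons_zero, Fin.cons_succ, hS]
            rw [Finset.mul_sum]
            congr 1
            refine Finset.sum_congr rfl (fun c _ => by ring)
          have hqbx : ∑ c : Fin (t + 1), qb c * x c
              = Real.sqrt v * x 0 - Real.sqrt (1 - v) * S := by
            rw [hqb, Fin.sum_univ_succ, sub_eq_add_neg]
            simp only [Fin.cons_zero, Fin.cons_succ]
            congr 1
            rw [hS, Finset.mul_sum, ← Finset.sum_neg_distrib]
            refine Finset.sum_congr rfl (fun c _ => by ring)
          simp only [hemb, hqax, hqbx]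
          have hIH := hq₂2 (fun c => x c.succ)
          rw [Fin.sum_univ_castSucc] at hIH
          simp only [hW₂, Fin.snoc_castSucc, Fin.snoc_last, ← hv', ← hS] at hIH
          rw [Fin.sum_univ_succ]
          have hsa := Real.sq_sqrt hu0
          have hsb := Real.sq_sqrt h1u
          have hsc := Real.sq_sqrt hv0
          have hsd := Real.sq_sqrt h1v
          linear_combination hIH + a * (x 0) ^ 2 * hsa + a * S ^ 2 * hsb
            + b * (x 0) ^ 2 * hsc + b * S ^ 2 * hsd + ((x 0) ^ 2 - S ^ 2) * huv1
            + 2 * (x 0) * S * hx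

noncomputable def embEuc (τ : ℕ) (y : Fin τ → ℝ) : EuclideanSpace ℝ (Fin τ) :=
  (WithLp.equiv 2 (Fin τ → ℝ)).symm y

/-- **Main achievability claim.** If the SINR requirements `γ k > 0` lie within the load
region `∑ k γ k/(1 + γ k) ≤ τ` and satisfy the majorization condition
`z k < B = (∑ j z j)/τ` where `z k = γ k/(1 + γ k)`, then there exist unit-norm pilot
sequences `q 1, …, q K ∈ ℝ^τ` such that the asymptotic SINR lower bound
`z k/(s k − z k)` with `s k = ∑ j z j ⟪q k, q j⟫²` meets every SINR requirement. -/
theorem sinr_requirements_achievable (K τ : ℕ) (hK : 0 < K) (hτ : 0 < τ) (hτK : τ ≤ K)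
    (γ : Fin K → ℝ) (hγ : ∀ k, 0 < γ k)
    (z : Fin K → ℝ) (hzdef : ∀ k, z k = γ k / (1 + γ k))
    (B : ℝ) (hBdef : B = (∑ j : Fin K, z j) / (τ : ℝ))
    (hload : ∑ k : Fin K, z k ≤ (τ : ℝ))
    (hzB : ∀ k, z k < B) :
    ∃ q : Fin K → EuclideanSpace ℝ (Fin τ),
      (∀ k, ‖q k‖ = 1) ∧
      ∀ k, z k < (∑ j : Fin K, z j * (inner ℝ (q k) (q j) : ℝ) ^ 2) ∧
        γ k ≤ z k / ((∑ j : Fin K, z j * (inner ℝ (q k) (q j) : ℝ) ^ 2) - z k) := by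
  have hτR : (0 : ℝ) < (τ : ℝ) := by exact_mod_cast hτ
  have hz0 : ∀ k, 0 < z k := by
    intro k
    rw [hzdef k]
    have := hγ k
    positivity
  have hz1 : ∀ k, z k < 1 := by
    intro k
    rw [hzdef k, div_lt_one (by linarith [hγ k])]
    linarith [hγ k]
  have hsumpos : 0 < ∑ j : Fin K, z j :=
    Finset.sum_pos (fun j _ => hz0 j) ⟨⟨0, hK⟩, Finset.mem_univ _⟩
  have hB0 : 0 < B := by rw [hBdef]; positivity
  have hB1 : B ≤ 1 := by
    rw [hBdef, div_le_one hτR]; exact hload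
  have hzsum : ∑ j : Fin K, z j = B * τ := by
    rw [hBdef]; field_simp
  -- apply the tight-frame construction with weights z/B
  obtain ⟨qf, hq1, hq2⟩ := exists_tight K τ hτ (fun k => z k / B)
    (fun k => div_pos (hz0 k) hB0)
    (fun k => by rw [div_le_one hB0]; exact (hzB k).le)
    (by rw [← Finset.sum_div, hzsum, mul_comm, mul_div_assoc, div_self hB0.ne', mul_one])
  refine ⟨fun k => embEuc τ (qf k), fun k => ?_, fun k => ?_⟩
  · rw [EuclideanSpace.norm_eq]
    simp only [embEuc, WithLp.equiv_symm_apply, WithLp.ofLp_toLp, Real.norm_eq_abs, sq_abs]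
    rw [hq1 k, Real.sqrt_one]
  · have hinner : ∀ j : Fin K,
        (inner ℝ (embEuc τ (qf k)) (embEuc τ (qf j)) : ℝ) = ∑ a, qf j a * qf k a := by
      intro j
      rw [PiLp.inner_apply]
      exact Finset.sum_congr rfl fun a _ => by
        simp [embEuc, WithLp.equiv_symm_apply, RCLike.inner_apply, mul_comm]
    have hs : (∑ j : Fin K, z j * (inner ℝ (embEuc τ (qf k)) (embEuc τ (qf j)) : ℝ) ^ 2) = B := by
      have h := hq2 (qf k)
      rw [hq1 k] at h
      calc ∑ j : Fin K, z j * (inner ℝ (embEuc τ (qf k)) (embEuc τ (qf j)) : ℝ) ^ 2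
          = B * ∑ j : Fin K, (z j / B) * (∑ a, qf j a * qf k a) ^ 2 := by
            rw [Finset.mul_sum]
            refine Finset.sum_congr rfl fun j _ => ?_
            rw [hinner j]
            field_simp
        _ = B * 1 := by rw [h]
        _ = B := mul_one B
    rw [hs]
    refine ⟨hzB k, ?_⟩
    have hden : 0 < B - z k := by linarith [hzB k]
    rw [le_div_iff₀ hden]
    have hpos1 : (0:ℝ) < 1 + γ k := by linarith [hγ k]
    have hzγ : z k + z k * γ k = γ k := by
      rw [hzdef k]
      field_simp
    have h4 : 0 ≤ γ k * (1 - B) := mul_nonneg (hγ k).le (by linarith)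
    nlinarith [hzγ, h4]
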